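/- Conserved quantities for the Lawlor-neck ODE: let n ≥ 1 and let z₁, …, zₙ : ℝ → ℂ be differentiable functions satisfying conj(z_j(s)) · z_j′(s) = i · ∏_{k=1}^n conj(z_k(s)) for all j and all s ∈ ℝ. Then for all s ∈ ℝ: (i) the quantity |z_j(s)|² − |z_j(0)|² is the same for all j; and (ii) Re(∏_{j=1}^n z_j(s)) = Re(∏_{j=1}^n z_j(0)). -/

import Mathlib

open Complex Finset

lemma hasDerivAt_re_comp {f : ℝ → ℂ} {f' : ℂ} {s : ℝ} (h : HasDerivAt f f' s) :
    HasDerivAt (fun t => (f t).re) f'.re s := by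
  exact (Complex.reCLM.hasFDerivAt.comp_hasDerivAt s h)

/-- **Conserved quantities for the Lawlor-neck ODE.** If `z₁, …, zₙ : ℝ → ℂ` satisfy
`conj(z_j) · z_j′ = i · ∏ₖ conj(z_k)`, then `|z_j(s)|² − |z_j(0)|²` is independent
of `j`, and `Re ∏ⱼ z_j(s)` is constant in `s`. -/
theorem lawlor_ode_conserved {n : ℕ} (hn : 1 ≤ n) (z z' : Fin n → ℝ → ℂ)
    (hderiv : ∀ (j : Fin n) (s : ℝ), HasDerivAt (z j) (z' j s) s)
    (hode : ∀ (j : Fin n) (s : ℝ),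
      starRingEnd ℂ (z j s) * z' j s = Complex.I * ∏ k, starRingEnd ℂ (z k s)) :
    (∀ (j l : Fin n) (s : ℝ),
      Complex.normSq (z j s) - Complex.normSq (z j 0) =
        Complex.normSq (z l s) - Complex.normSq (z l 0)) ∧
    (∀ s : ℝ, (∏ j, z j s).re = (∏ j, z j 0).re) := by
  -- derivative of normSq of each coordinate; it is independent of the coordinate
  have hN : ∀ (j : Fin n) (s : ℝ), HasDerivAt (fun t => Complex.normSq (z j t))
      (2 * (Complex.I * ∏ k, starRingEnd ℂ (z k s)).re) s := by
    intro j s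
    have h1 : HasDerivAt (fun t => starRingEnd ℂ (z j t) * z j t)
        (starRingEnd ℂ (z' j s) * z j s + starRingEnd ℂ (z j s) * z' j s) s :=
      ((hderiv j s).star).mul (hderiv j s)
    have h2 := hasDerivAt_re_comp h1
    have e1 : (fun t => (starRingEnd ℂ (z j t) * z j t).re) =
        fun t => Complex.normSq (z j t) := by
      funext t
      rw [mul_comm, Complex.mul_conj]
      simp
    have e2 : (starRingEnd ℂ (z' j s) * z j s + starRingEnd ℂ (z j s) * z' j s).re =
        2 * (Complex.I * ∏ k, starRingEnd ℂ (z k s)).re := by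
      have h3 : starRingEnd ℂ (z' j s) * z j s =
          starRingEnd ℂ (starRingEnd ℂ (z j s) * z' j s) := by
        simp [mul_comm]
      rw [Complex.add_re, h3, Complex.conj_re, hode j s]
      ring
    rw [e1, e2] at h2
    exact h2
  constructor
  · intro j l s
    have hgd : ∀ t : ℝ, HasDerivAt
        (fun t => Complex.normSq (z j t) - Complex.normSq (z l t)) 0 t := by
      intro t
      have h := (hN j t).sub (hN l t)
      rw [sub_self] at h
      exact h
    have := is_const_of_deriv_eq_zero
      (f := fun t => Complex.normSq (z j t) - Complex.normSq (z l t))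
      (fun t => (hgd t).differentiableAt) (fun t => (hgd t).deriv) s 0
    linarith
  · -- Part (ii)
    set P : ℝ → ℂ := fun t => ∏ k, z k t with hPdef
    set P' : ℝ → ℂ := fun t => ∑ j, (∏ k ∈ Finset.univ.erase j, z k t) * z' j t with hP'def
    have hP : ∀ s, HasDerivAt P (P' s) s := by
      intro s
      have := HasDerivAt.finset_prod (u := Finset.univ) (f := fun j => z j)
        (f' := fun j => z' j s) (x := s) (fun i _ => hderiv i s)
      simp only [smul_eq_mul] at this
      have hPf : P = ∏ i, z i := by
        ext t
        simp [hPdef, Finset.prod_apply]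
      rw [hPf]
      exact this
    -- key algebraic identity
    have key : ∀ s, starRingEnd ℂ (P s) * P' s =
        Complex.I * starRingEnd ℂ (P s) *
          (∑ j, ∏ k ∈ Finset.univ.erase j, (Complex.normSq (z k s) : ℂ)) := by
      intro s
      have hconjP : starRingEnd ℂ (P s) = ∏ k, starRingEnd ℂ (z k s) := by
        simp [hPdef, map_prod]
      rw [hP'def, Finset.mul_sum, Finset.mul_sum]
      apply Finset.sum_congr rfl
      intro j _
      have hsplit : (∏ k, starRingEnd ℂ (z k s)) =
          starRingEnd ℂ (z j s) * ∏ k ∈ Finset.univ.erase j, starRingEnd ℂ (z k s) :=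
        (Finset.mul_prod_erase Finset.univ _ (Finset.mem_univ j)).symm
      calc starRingEnd ℂ (P s) * ((∏ k ∈ Finset.univ.erase j, z k s) * z' j s)
          = (starRingEnd ℂ (z j s) * z' j s) *
            ∏ k ∈ Finset.univ.erase j, (starRingEnd ℂ (z k s) * z k s) := by
            rw [hconjP, hsplit, Finset.prod_mul_distrib]; ring
        _ = (Complex.I * ∏ k, starRingEnd ℂ (z k s)) *
            ∏ k ∈ Finset.univ.erase j, (Complex.normSq (z k s) : ℂ) := by
            rw [hode j s]
            congr 1
            apply Finset.prod_congr rfl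
            intro k _
            rw [mul_comm]
            exact Complex.mul_conj _
        _ = Complex.I * starRingEnd ℂ (P s) *
            (∏ k ∈ Finset.univ.erase j, (Complex.normSq (z k s) : ℂ)) := by
            rw [hconjP]
    -- pointwise: Re P · Re P' = 0
    have hpt : ∀ s, (P s).re * (P' s).re = 0 := by
      intro s
      by_cases h : P s = 0
      · rw [h]; simp
      · have hc : starRingEnd ℂ (P s) ≠ 0 := by simpa using h
        have hPeq : P' s = Complex.I *
            (∑ j, ∏ k ∈ Finset.univ.erase j, (Complex.normSq (z k s) : ℂ)) := by
          apply mul_left_cancel₀ hc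
          rw [key s]; ring
        have hR : (∑ j, ∏ k ∈ Finset.univ.erase j, (Complex.normSq (z k s) : ℂ)) =
            ((∑ j, ∏ k ∈ Finset.univ.erase j, Complex.normSq (z k s) : ℝ) : ℂ) := by
          push_cast; ring
        have him : (∑ j, ∏ k ∈ Finset.univ.erase j, (Complex.normSq (z k s) : ℂ)).im = 0 := by
          rw [hR]; exact Complex.ofReal_im _
        rw [hPeq, Complex.mul_re, Complex.I_re, Complex.I_im, him]
        ring
    -- (Re P)² is constant
    have hf : ∀ s, HasDerivAt (fun t => (P t).re) ((P' s).re) s :=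
      fun s => hasDerivAt_re_comp (hP s)
    have hd : ∀ s : ℝ, HasDerivAt (fun t => ((P t).re) ^ 2) 0 s := by
      intro s
      have h0 : (2 : ℕ) * (P s).re ^ (2 - 1) * (P' s).re = 0 := by
        have := hpt s
        push_cast
        rw [pow_one]
        nlinarith [hpt s]
      have := (hf s).pow 2
      rwa [h0] at this
    have hsq : ∀ s : ℝ, ((P s).re) ^ 2 = ((P 0).re) ^ 2 := by
      intro s
      exact is_const_of_deriv_eq_zero (f := fun t => ((P t).re) ^ 2)
        (fun t => (hd t).differentiableAt) (fun t => (hd t).deriv) s 0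
    -- conclude Re P is constant using continuity
    intro s
    rcases sq_eq_sq_iff_eq_or_eq_neg.mp (hsq s) with h | h
    · exact h
    · by_cases h0 : (P 0).re = 0
      · rw [h, h0, neg_zero]
      · exfalso
        have hcont : ContinuousOn (fun t => (P t).re) (Set.uIcc 0 s) :=
          (Differentiable.continuous (fun t => (hf t).differentiableAt)).continuousOn
        have hmem : (0 : ℝ) ∈ Set.uIcc ((P (0:ℝ)).re) ((P s).re) := by
          rw [h]
          rcases le_total ((P (0:ℝ)).re) 0 with hle | hle
          · exact Set.mem_uIcc.mpr (Or.inl ⟨hle, by linarith⟩)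
          · exact Set.mem_uIcc.mpr (Or.inr ⟨by linarith, hle⟩)
        obtain ⟨t, _, hft⟩ := intermediate_value_uIcc hcont hmem
        have hft' : (P t).re = 0 := hft
        have h2 := hsq t
        rw [hft'] at h2
        exact h0 (by nlinarith [h2])
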